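/- Let f be a piecewise contracting interval map on X with attractor Λ, and suppose f satisfies the separation property. Then for every x ∈ Λ, the decreasing sequence {B_k}_{k≥1} of atoms with x ∈ B_k ∈ 𝒜_k for all k ≥ 1 and ∩_{k≥1} B_k = {x} is unique. -/

import Mathlib

open Set Filter Metric Topology

/-- A piecewise contracting interval map (PCIM) on the compact interval `X = [a,b]`:
there are `N ≥ 1` pairwise disjoint nonempty open (relative to `X`) subintervals
whose closures cover `X`, and `f` contracts with rate `lam ∈ (0,1)` on each piece. -/
structure PCIM where
  a : ℝ
  b : ℝ
  hab : a < b
  N : ℕ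
  hN : 1 ≤ N
  f : ℝ → ℝ
  lam : ℝ
  hlam₀ : 0 < lam
  hlam₁ : lam < 1
  piece : Fin N → Set ℝ
  piece_nonempty : ∀ i, (piece i).Nonempty
  piece_interval : ∀ i, ∃ c d : ℝ, piece i = Set.Ioo c d ∩ Set.Icc a b
  piece_disjoint : ∀ i j, i ≠ j → Disjoint (piece i) (piece j)
  cover : Set.Icc a b = ⋃ i, closure (piece i)
  mapsTo : Set.MapsTo f (Set.Icc a b) (Set.Icc a b)
  contract : ∀ i, ∀ x ∈ piece i, ∀ y ∈ piece i, |f x - f y| ≤ lam * |x - y|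

namespace PCIM

variable (P : PCIM)

/-- The underlying compact interval `X`. -/
def X : Set ℝ := Set.Icc P.a P.b

/-- `X* = ⋃ i, X_i`, the union of the contraction pieces. -/
def Xstar : Set ℝ := ⋃ i, P.piece i

/-- `Δ = X \ X*`, the set of boundaries of the contraction pieces. -/
def Delta : Set ℝ := P.X \ P.Xstar

/-- `X̃ = ⋂_{j ≥ 0} f⁻ʲ(X*)`, the points all of whose iterates are well defined. -/
def Xtilde : Set ℝ := ⋂ j : ℕ, (P.f^[j]) ⁻¹' P.Xstar

/-- `D`: the set of one-sided limits of `f` at the points of `Δ`. -/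
def D : Set ℝ :=
  {L | ∃ c ∈ P.Delta,
    ((𝓝[P.X ∩ Set.Iio c] c).NeBot ∧ Filter.Tendsto P.f (𝓝[P.X ∩ Set.Iio c] c) (𝓝 L)) ∨
    ((𝓝[P.X ∩ Set.Ioi c] c).NeBot ∧ Filter.Tendsto P.f (𝓝[P.X ∩ Set.Ioi c] c) (𝓝 L))}

/-- A set `A` is `f`-pseudo-invariant if for every `x ∈ A` at least one of the
one-sided limits of `f` at `x` belongs to `A`. -/
def PseudoInvariant (A : Set ℝ) : Prop :=
  ∀ x ∈ A,
    (∃ L ∈ A, (𝓝[P.X ∩ Set.Iio x] x).NeBot ∧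
      Filter.Tendsto P.f (𝓝[P.X ∩ Set.Iio x] x) (𝓝 L)) ∨
    (∃ L ∈ A, (𝓝[P.X ∩ Set.Ioi x] x).NeBot ∧
      Filter.Tendsto P.f (𝓝[P.X ∩ Set.Ioi x] x) (𝓝 L))

/-- `f` is piecewise monotonic: strictly monotone on each contraction piece. -/
def PiecewiseMonotonic : Prop :=
  ∀ i, StrictMonoOn P.f (P.piece i) ∨ StrictAntiOn P.f (P.piece i)

/-- `f` satisfies the separation property: it is piecewise monotonic and the closures
of the images of distinct pieces are disjoint. -/
def SeparationProperty : Prop :=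
  P.PiecewiseMonotonic ∧
    ∀ i j, i ≠ j → closure (P.f '' P.piece i) ∩ closure (P.f '' P.piece j) = ∅

/-- The iterates `Λ_n` defining the attractor: `Λ_0 = X`,
`Λ_{n+1} = cl (f (Λ_n \ Δ))`. -/
def LambdaIter : (P : PCIM) → ℕ → Set ℝ
  | Q, 0 => Q.X
  | Q, n + 1 => closure (Q.f '' (LambdaIter Q n \ Q.Delta))

/-- The attractor `Λ = ⋂_{n ≥ 1} Λ_n`. -/
def Lambda : Set ℝ := ⋂ n : ℕ, P.LambdaIter (n + 1)

/-- The atom associated to the word `w = [i₁, …, iₙ]`: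
`A_{i₁…iₙ} = F_{iₙ} ∘ ⋯ ∘ F_{i₁}(X)` where `F_i(A) = cl (f (A ∩ X_i))`. -/
def atomOf (w : List (Fin P.N)) : Set ℝ :=
  w.foldl (fun A i => closure (P.f '' (A ∩ P.piece i))) P.X

/-- `𝒜_n`: the set of (nonempty) atoms of generation `n`. -/
def atoms (n : ℕ) : Set (Set ℝ) :=
  {A | ∃ w : List (Fin P.N), w.length = n ∧ P.atomOf w = A ∧ A.Nonempty}

/-- `θ` is the itinerary of `x`: `f^t(x) ∈ X_{θ_t}` for all `t`. -/
def IsItinerary (x : ℝ) (θ : ℕ → Fin P.N) : Prop :=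
  ∀ t : ℕ, P.f^[t] x ∈ P.piece (θ t)

/-- The word `θ_t θ_{t+1} … θ_{t+n-1}` of length `n` of the sequence `θ`. -/
def word (θ : ℕ → Fin P.N) (t n : ℕ) : List (Fin P.N) :=
  (List.range n).map fun k => θ (t + k)

/-- `L_n(θ)`: the set of words of length `n` occurring in `θ`. -/
def lang (θ : ℕ → Fin P.N) (n : ℕ) : Set (List (Fin P.N)) :=
  {w | ∃ t : ℕ, w = P.word θ t n}

/-- The complexity function `p_θ(n) = #L_n(θ)`. -/
noncomputable def complexity (θ : ℕ → Fin P.N) (n : ℕ) : ℕ := (P.lang θ n).ncard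

/-- The forward orbit of `x` under `f`. -/
def orbit (x : ℝ) : Set ℝ := {y | ∃ k : ℕ, P.f^[k] x = y}

/-- The ω-limit set of `x` under `f`. -/
def omegaLimitSet (x : ℝ) : Set ℝ :=
  ⋂ n : ℕ, closure {y | ∃ m : ℕ, n ≤ m ∧ P.f^[m] x = y}

/-- A compact pseudo-invariant set `A` is `X̃`-minimal if the orbit of every point
of `A ∩ X̃` is dense in `A`. -/
def XtildeMinimal (A : Set ℝ) : Prop :=
  IsCompact A ∧ P.PseudoInvariant A ∧ ∀ x ∈ A ∩ P.Xtilde, A ⊆ closure (P.orbit x)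

/-- A periodic orbit contained in `X̃`. -/
def IsPeriodicOrbit (A : Set ℝ) : Prop :=
  ∃ x ∈ P.Xtilde, ∃ p : ℕ, 1 ≤ p ∧ P.f^[p] x = x ∧ A = P.orbit x

end PCIM

/-- A Cantor set: nonempty, compact, perfect and totally disconnected. -/
def IsCantorSet (A : Set ℝ) : Prop :=
  A.Nonempty ∧ IsCompact A ∧ Perfect A ∧ IsTotallyDisconnected A


namespace PCIMProofAux

lemma atomOf_concat (P : PCIM) (w : List (Fin P.N)) (i : Fin P.N) :
    P.atomOf (w ++ [i]) = closure (P.f '' (P.atomOf w ∩ P.piece i)) := by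
  simp [PCIM.atomOf, List.foldl_append]

lemma piece_subset_Icc (P : PCIM) (i : Fin P.N) : P.piece i ⊆ Set.Icc P.a P.b := by
  obtain ⟨c, d, hcd⟩ := P.piece_interval i
  rw [hcd]; exact Set.inter_subset_right

/-- If two sequences in piece `i` converge to distinct limits, their `f`-images
cannot converge to the same point. -/
lemma seq_absurd (P : PCIM) (i : Fin P.N)
    (hm : StrictMonoOn P.f (P.piece i) ∨ StrictAntiOn P.f (P.piece i))
    (u v : ℕ → ℝ) (hu : ∀ n, u n ∈ P.piece i) (hv : ∀ n, v n ∈ P.piece i)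
    (l l' z : ℝ)
    (hul : Filter.Tendsto u Filter.atTop (𝓝 l))
    (hvl : Filter.Tendsto v Filter.atTop (𝓝 l'))
    (hfu : Filter.Tendsto (fun n => P.f (u n)) Filter.atTop (𝓝 z))
    (hfv : Filter.Tendsto (fun n => P.f (v n)) Filter.atTop (𝓝 z))
    (hll : l < l') : False := by
  obtain ⟨c, d, hcd⟩ := P.piece_interval i
  obtain ⟨p, hp⟩ := P.piece_nonempty i
  rw [hcd] at hp
  have hcd' : c < d := lt_trans hp.1.1 hp.1.2
  have hbound : ∀ y : ℝ, y ∈ closure (P.piece i) → y ∈ Set.Icc c d ∩ Set.Icc P.a P.b := by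
    intro y hy
    rw [hcd] at hy
    have := closure_inter_subset_inter_closure (Set.Ioo c d) (Set.Icc P.a P.b) hy
    rw [closure_Ioo hcd'.ne, closure_Icc] at this
    exact this
  have hl : l ∈ Set.Icc c d ∩ Set.Icc P.a P.b :=
    hbound l (mem_closure_of_tendsto hul (Filter.Eventually.of_forall hu))
  have hl' : l' ∈ Set.Icc c d ∩ Set.Icc P.a P.b :=
    hbound l' (mem_closure_of_tendsto hvl (Filter.Eventually.of_forall hv))
  set t1 : ℝ := l + (l' - l) / 3 with ht1def
  set t2 : ℝ := l' - (l' - l) / 3 with ht2def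
  have h3 : 0 < (l' - l) / 3 := by linarith
  have hlt1 : l < t1 := by simp only [ht1def]; linarith
  have ht12 : t1 < t2 := by simp only [ht1def, ht2def]; linarith
  have ht2l : t2 < l' := by simp only [ht2def]; linarith
  have ht1mem : t1 ∈ P.piece i := by
    rw [hcd]
    refine ⟨⟨lt_of_le_of_lt hl.1.1 hlt1, ?_⟩, ⟨le_trans hl.2.1 hlt1.le, ?_⟩⟩
    · exact lt_of_lt_of_le (lt_trans ht12 ht2l) hl'.1.2
    · exact le_trans (lt_trans ht12 ht2l).le hl'.2.2
  have ht2mem : t2 ∈ P.piece i := by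
    rw [hcd]
    refine ⟨⟨lt_of_le_of_lt hl.1.1 (lt_trans hlt1 ht12), ?_⟩,
      ⟨le_trans hl.2.1 (lt_trans hlt1 ht12).le, ?_⟩⟩
    · exact lt_of_lt_of_le ht2l hl'.1.2
    · exact le_trans ht2l.le hl'.2.2
  have h1 : ∀ᶠ n in Filter.atTop, u n < t1 := hul.eventually_lt_const hlt1
  have h2 : ∀ᶠ n in Filter.atTop, t2 < v n := hvl.eventually_const_lt ht2l
  rcases hm with hmono | hanti
  · have hz1 : z ≤ P.f t1 :=
      le_of_tendsto hfu (h1.mono fun n hn => (hmono (hu n) ht1mem hn).le)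
    have hz2 : P.f t2 ≤ z :=
      ge_of_tendsto hfv (h2.mono fun n hn => (hmono ht2mem (hv n) hn).le)
    have : P.f t1 < P.f t2 := hmono ht1mem ht2mem ht12
    linarith
  · have hz1 : P.f t1 ≤ z :=
      ge_of_tendsto hfu (h1.mono fun n hn => (hanti (hu n) ht1mem hn).le)
    have hz2 : z ≤ P.f t2 :=
      le_of_tendsto hfv (h2.mono fun n hn => (hanti ht2mem (hv n) hn).le)
    have : P.f t2 < P.f t1 := hanti ht1mem ht2mem ht12
    linarith

/-- Key lemma: the closures of images of two subsets of a piece with disjoint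
closures are disjoint. -/
lemma closure_image_disjoint (P : PCIM) (i : Fin P.N)
    (hm : StrictMonoOn P.f (P.piece i) ∨ StrictAntiOn P.f (P.piece i))
    (S S' : Set ℝ) (hS : S ⊆ P.piece i) (hS' : S' ⊆ P.piece i)
    (hd : closure S ∩ closure S' = ∅) :
    closure (P.f '' S) ∩ closure (P.f '' S') = ∅ := by
  by_contra h
  obtain ⟨z, hz1, hz2⟩ := Set.nonempty_iff_ne_empty.mpr h
  obtain ⟨y, hy, hyz⟩ := mem_closure_iff_seq_limit.mp hz1
  choose u hu hfu using hy
  obtain ⟨y', hy', hyz'⟩ := mem_closure_iff_seq_limit.mp hz2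
  choose v hv hfv using hy'
  have hfu' : Filter.Tendsto (fun n => P.f (u n)) Filter.atTop (𝓝 z) := by
    have : (fun n => P.f (u n)) = y := funext hfu
    rw [this]; exact hyz
  have hfv' : Filter.Tendsto (fun n => P.f (v n)) Filter.atTop (𝓝 z) := by
    have : (fun n => P.f (v n)) = y' := funext hfv
    rw [this]; exact hyz'
  have hScpt : IsCompact (closure S) :=
    IsCompact.of_isClosed_subset isCompact_Icc isClosed_closure
      (closure_minimal (fun x hx => piece_subset_Icc P i (hS hx)) isClosed_Icc)
  have hScpt' : IsCompact (closure S') :=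
    IsCompact.of_isClosed_subset isCompact_Icc isClosed_closure
      (closure_minimal (fun x hx => piece_subset_Icc P i (hS' hx)) isClosed_Icc)
  obtain ⟨l, hl, φ, hφ, hulφ⟩ := hScpt.tendsto_subseq (fun n => subset_closure (hu n))
  obtain ⟨l', hl', ψ, hψ, hvlψ⟩ :=
    hScpt'.tendsto_subseq (x := fun n => v (φ n)) (fun n => subset_closure (hv (φ n)))
  -- final subsequences: n ↦ u (φ (ψ n)) and n ↦ v (φ (ψ n))
  have hU : Filter.Tendsto (fun n => u (φ (ψ n))) Filter.atTop (𝓝 l) :=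
    hulφ.comp hψ.tendsto_atTop
  have hV : Filter.Tendsto (fun n => v (φ (ψ n))) Filter.atTop (𝓝 l') := hvlψ
  have hfU : Filter.Tendsto (fun n => P.f (u (φ (ψ n)))) Filter.atTop (𝓝 z) :=
    hfu'.comp ((hφ.comp hψ).tendsto_atTop)
  have hfV : Filter.Tendsto (fun n => P.f (v (φ (ψ n)))) Filter.atTop (𝓝 z) :=
    hfv'.comp ((hφ.comp hψ).tendsto_atTop)
  have hne : l ≠ l' := by
    intro hEq
    have : l ∈ closure S ∩ closure S' := ⟨hl, hEq ▸ hl'⟩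
    rw [hd] at this; exact this
  rcases hne.lt_or_gt with hlt | hlt
  · exact seq_absurd P i hm _ _ (fun n => hS (hu (φ (ψ n)))) (fun n => hS' (hv (φ (ψ n))))
      l l' z hU hV hfU hfV hlt
  · exact seq_absurd P i hm _ _ (fun n => hS' (hv (φ (ψ n)))) (fun n => hS (hu (φ (ψ n))))
      l' l z hV hU hfV hfU hlt

/-- Under the separation property, atoms of the same generation that intersect
are equal. -/
lemma atomOf_eq_of_inter (P : PCIM) (hsep : P.SeparationProperty) :
    ∀ w w' : List (Fin P.N), w.length = w'.length →
      (P.atomOf w ∩ P.atomOf w').Nonempty → P.atomOf w = P.atomOf w' := by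
  intro w
  induction w using List.reverseRecOn with
  | nil =>
    intro w' hlen _
    obtain rfl : w' = [] := List.eq_nil_of_length_eq_zero (by simpa using hlen.symm)
    rfl
  | append_singleton w i ih =>
    intro w' hlen hne
    obtain ⟨w'', j, rfl⟩ : ∃ w'' j, w' = w'' ++ [j] := by
      rcases w'.eq_nil_or_concat with rfl | ⟨w'', j, hw'⟩
      · simp at hlen
      · rw [List.concat_eq_append] at hw'
        exact ⟨w'', j, hw'⟩
    · have hlen' : w.length = w''.length := by
        simpa using hlen
      -- first, the last letters agree
      have hsubi : P.atomOf (w ++ [i]) ⊆ closure (P.f '' P.piece i) := by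
        rw [atomOf_concat]
        exact closure_mono (Set.image_mono Set.inter_subset_right)
      have hsubj : P.atomOf (w'' ++ [j]) ⊆ closure (P.f '' P.piece j) := by
        rw [atomOf_concat]
        exact closure_mono (Set.image_mono Set.inter_subset_right)
      have hij : i = j := by
        by_contra hij
        obtain ⟨z, hz1, hz2⟩ := hne
        have : z ∈ closure (P.f '' P.piece i) ∩ closure (P.f '' P.piece j) :=
          ⟨hsubi hz1, hsubj hz2⟩
        rw [hsep.2 i j hij] at this
        exact this
      subst hij
      -- now compare the prefixes
      by_cases hAA : (P.atomOf w ∩ P.atomOf w'').Nonempty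
      · have := ih w'' hlen' hAA
        rw [atomOf_concat, atomOf_concat, this]
      · -- prefix atoms are disjoint; they are closed (prefixes are nonempty lists)
        exfalso
        have hAAe : P.atomOf w ∩ P.atomOf w'' = ∅ :=
          Set.not_nonempty_iff_eq_empty.mp hAA
        rcases w.eq_nil_or_concat with rfl | hwk
        · -- then w'' = [] too, both atoms are X, which is nonempty
          have hw'' : w'' = [] := List.eq_nil_of_length_eq_zero (by simpa using hlen'.symm)
          subst hw''
          have : P.a ∈ P.atomOf ([] : List (Fin P.N)) ∩ P.atomOf ([] : List (Fin P.N)) := by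
            constructor <;>
              · show P.a ∈ P.X
                exact Set.left_mem_Icc.mpr P.hab.le
          exact hAA ⟨P.a, this⟩
        · obtain ⟨w₀, k, rfl⟩ : ∃ w₀ k, w = w₀ ++ [k] := by
            obtain ⟨w₀, k, hwk'⟩ := hwk
            rw [List.concat_eq_append] at hwk'
            exact ⟨w₀, k, hwk'⟩
          obtain ⟨w₁, m, rfl⟩ : ∃ w₁ m, w'' = w₁ ++ [m] := by
            rcases w''.eq_nil_or_concat with rfl | ⟨w₁, m, hwm⟩
            · simp at hlen'
            · rw [List.concat_eq_append] at hwm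
              exact ⟨w₁, m, hwm⟩
          have hcl : IsClosed (P.atomOf (w₀ ++ [k])) := by
            rw [atomOf_concat]; exact isClosed_closure
          have hcl' : IsClosed (P.atomOf (w₁ ++ [m])) := by
            rw [atomOf_concat]; exact isClosed_closure
          have hd : closure (P.atomOf (w₀ ++ [k]) ∩ P.piece i) ∩
              closure (P.atomOf (w₁ ++ [m]) ∩ P.piece i) = ∅ := by
            apply Set.eq_empty_of_subset_empty
            calc closure (P.atomOf (w₀ ++ [k]) ∩ P.piece i) ∩
                closure (P.atomOf (w₁ ++ [m]) ∩ P.piece i)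
                ⊆ P.atomOf (w₀ ++ [k]) ∩ P.atomOf (w₁ ++ [m]) := by
                  apply Set.inter_subset_inter
                  · exact closure_minimal Set.inter_subset_left hcl
                  · exact closure_minimal Set.inter_subset_left hcl'
              _ = ∅ := hAAe
          have := closure_image_disjoint P i (hsep.1 i)
            (P.atomOf (w₀ ++ [k]) ∩ P.piece i) (P.atomOf (w₁ ++ [m]) ∩ P.piece i)
            Set.inter_subset_right Set.inter_subset_right hd
          obtain ⟨z, hz1, hz2⟩ := hne
          rw [atomOf_concat] at hz1 hz2
          have : z ∈ (∅ : Set ℝ) := this ▸ Set.mem_inter hz1 hz2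
          exact this

end PCIMProofAux

/-- Under the separation property, for every `x ∈ Λ` the
decreasing sequence of atoms `B_k ∈ 𝒜_k` with `x ∈ B_k` and `⋂ B_k = {x}`
is unique. -/
theorem decreasing_atoms_unique (P : PCIM) (hsep : P.SeparationProperty) :
    ∀ x ∈ P.Lambda, ∀ B C : ℕ → Set ℝ,
      ((∀ k : ℕ, 1 ≤ k → x ∈ B k ∧ B k ∈ P.atoms k) ∧
        (∀ k : ℕ, 1 ≤ k → B (k + 1) ⊆ B k) ∧
        (⋂ k : ℕ, ⋂ (_ : 1 ≤ k), B k) = {x}) →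
      ((∀ k : ℕ, 1 ≤ k → x ∈ C k ∧ C k ∈ P.atoms k) ∧
        (∀ k : ℕ, 1 ≤ k → C (k + 1) ⊆ C k) ∧
        (⋂ k : ℕ, ⋂ (_ : 1 ≤ k), C k) = {x}) →
      ∀ k : ℕ, 1 ≤ k → B k = C k := by
  intro x _ B C hB hC k hk
  obtain ⟨hxB, wB, hwBlen, hwB, _⟩ :
      x ∈ B k ∧ ∃ w : List (Fin P.N), w.length = k ∧ P.atomOf w = B k ∧ (B k).Nonempty := by
    obtain ⟨h1, h2⟩ := hB.1 k hk
    exact ⟨h1, h2⟩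
  obtain ⟨hxC, wC, hwClen, hwC, _⟩ :
      x ∈ C k ∧ ∃ w : List (Fin P.N), w.length = k ∧ P.atomOf w = C k ∧ (C k).Nonempty := by
    obtain ⟨h1, h2⟩ := hC.1 k hk
    exact ⟨h1, h2⟩
  rw [← hwB, ← hwC]
  exact PCIMProofAux.atomOf_eq_of_inter P hsep wB wC (hwBlen.trans hwClen.symm)
    ⟨x, by rw [hwB]; exact hxB, by rw [hwC]; exact hxC⟩
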